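/- arXiv:1802.09190 — 2 statements merged into one kernel-verified Lean document; each statement's English description precedes it below -/
import Mathlib

section
/- For all m, n ∈ ℕ and all x ∈ ℝ, H_{n+m}(x) = Σ_{r=0}^{min(n,m)} binom(n,r) · binom(m,r) · (−2)^r · r! · H_{n−r}(x) · H_{m−r}(x). -/
open Finset
open scoped ContDiff

/-- Physicists' Hermite polynomial `H_n(x)`. -/
noncomputable def hermiteH (n : ℕ) (x : ℝ) : ℝ :=
  (n.factorial : ℝ) * ∑ m ∈ Finset.range (n / 2 + 1),
    (-1 : ℝ) ^ m * (2 * x) ^ (n - 2 * m) / ((m.factorial : ℝ) * ((n - 2 * m).factorial : ℝ))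

noncomputable def hc (n m : ℕ) : ℝ :=
  if 2 * m ≤ n then (-1 : ℝ) ^ m * (n.factorial : ℝ) /
    ((m.factorial : ℝ) * ((n - 2 * m).factorial : ℝ)) else 0

lemma hc_zero (n : ℕ) : hc n 0 = 1 := by
  simp [hc, Nat.factorial_ne_zero, div_self]

lemma hc_big {n m : ℕ} (h : n < 2 * m) : hc n m = 0 := by
  rw [hc, if_neg (by omega)]

lemma hermiteH_eq_sum (n : ℕ) (x : ℝ) :
    hermiteH n x = ∑ m ∈ Finset.range (n + 1), hc n m * (2 * x) ^ (n - 2 * m) := by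
  rw [hermiteH, Finset.mul_sum]
  rw [← Finset.sum_subset (Finset.range_subset_range.mpr (by omega : n / 2 + 1 ≤ n + 1))]
  · apply Finset.sum_congr rfl
    intro m hm
    simp only [Finset.mem_range] at hm
    have h2 : 2 * m ≤ n := by omega
    rw [hc, if_pos h2]
    ring
  · intro m hm hm'
    simp only [Finset.mem_range] at hm hm'
    have : ¬ (2 * m ≤ n) := by omega
    rw [hc, if_neg this, zero_mul]

lemma hermiteH_zero (x : ℝ) : hermiteH 0 x = 1 := by
  simp [hermiteH]

lemma hermiteH_one (x : ℝ) : hermiteH 1 x = 2 * x := by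
  simp [hermiteH, Nat.factorial]

lemma hc_rec (n m : ℕ) :
    hc (n + 2) (m + 1) = hc (n + 1) (m + 1) - 2 * (n + 1) * hc n m := by
  unfold hc
  rcases lt_trichotomy (2 * m) n with h | h | h
  · obtain ⟨k, rfl⟩ : ∃ k, n = 2 * m + 1 + k := ⟨n - (2*m+1), by omega⟩
    rw [if_pos (by omega), if_pos (by omega), if_pos (by omega)]
    have e1 : 2 * m + 1 + k + 2 - 2 * (m + 1) = k + 1 := by omega
    have e2 : 2 * m + 1 + k + 1 - 2 * (m + 1) = k := by omega
    have e3 : 2 * m + 1 + k - 2 * m = k + 1 := by omega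
    rw [e1, e2, e3]
    have f1 : ((2 * m + 1 + k + 2).factorial : ℝ)
        = (2*m+k+3) * (2*m+k+2) * ((2 * m + 1 + k).factorial : ℝ) := by
      have : 2 * m + 1 + k + 2 = (2*m+1+k) + 2 := by ring
      rw [this]
      push_cast [Nat.factorial_succ]
      ring_nf
    have f2 : ((2 * m + 1 + k + 1).factorial : ℝ)
        = (2*m+k+2) * ((2 * m + 1 + k).factorial : ℝ) := by
      push_cast [Nat.factorial_succ]; ring_nf
    have f3 : ((m+1).factorial : ℝ) = (m+1) * (m.factorial : ℝ) := by
      push_cast [Nat.factorial_succ]; ring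
    have f4 : ((k+1).factorial : ℝ) = (k+1) * (k.factorial : ℝ) := by
      push_cast [Nat.factorial_succ]; ring
    rw [f1, f2, f3, f4]
    have hm : (m.factorial : ℝ) ≠ 0 := Nat.cast_ne_zero.mpr m.factorial_ne_zero
    have hk : (k.factorial : ℝ) ≠ 0 := Nat.cast_ne_zero.mpr k.factorial_ne_zero
    field_simp
    push_cast
    ring
  · subst h
    rw [if_pos (by omega), if_neg (by omega), if_pos (le_refl (2 * m))]
    have e1 : 2 * m + 2 - 2 * (m + 1) = 0 := by omega
    have e2 : 2 * m - 2 * m = 0 := by omega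
    rw [e1, e2]
    have f1 : ((2 * m + 2).factorial : ℝ)
        = (2*m+2) * (2*m+1) * ((2 * m).factorial : ℝ) := by
      push_cast [Nat.factorial_succ]; ring_nf
    have f3 : ((m+1).factorial : ℝ) = (m+1) * (m.factorial : ℝ) := by
      push_cast [Nat.factorial_succ]; ring
    rw [f1, f3]
    have hm : (m.factorial : ℝ) ≠ 0 := Nat.cast_ne_zero.mpr m.factorial_ne_zero
    simp only [Nat.factorial_zero, Nat.cast_one, mul_one]
    field_simp
    push_cast
    ring
  · rw [if_neg (by omega), if_neg (by omega), if_neg (by omega)]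
    ring

lemma hc_deriv (n m : ℕ) :
    hc (n + 1) m * ((n + 1 - 2 * m : ℕ) : ℝ) * 2 = 2 * (n + 1) * hc n m := by
  unfold hc
  rcases le_or_gt (2 * m) n with h | h
  · obtain ⟨k, rfl⟩ : ∃ k, n = 2 * m + k := ⟨n - 2*m, by omega⟩
    rw [if_pos (by omega), if_pos (by omega)]
    have e1 : 2 * m + k + 1 - 2 * m = k + 1 := by omega
    have e2 : 2 * m + k - 2 * m = k := by omega
    rw [e1, e2]
    have f1 : ((2 * m + k + 1).factorial : ℝ)
        = (2*m+k+1) * ((2 * m + k).factorial : ℝ) := by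
      push_cast [Nat.factorial_succ]; ring_nf
    have f4 : ((k+1).factorial : ℝ) = (k+1) * (k.factorial : ℝ) := by
      push_cast [Nat.factorial_succ]; ring
    rw [f1, f4]
    have hm : (m.factorial : ℝ) ≠ 0 := Nat.cast_ne_zero.mpr m.factorial_ne_zero
    have hk : (k.factorial : ℝ) ≠ 0 := Nat.cast_ne_zero.mpr k.factorial_ne_zero
    push_cast
    field_simp
  · rcases eq_or_lt_of_le (by omega : n + 1 ≤ 2 * m) with h2 | h2
    · rw [if_pos (by omega), if_neg (by omega)]
      have : n + 1 - 2 * m = 0 := by omega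
      rw [this]
      simp
    · rw [if_neg (by omega), if_neg (by omega)]
      ring

lemma hermiteH_rec (n : ℕ) (x : ℝ) :
    hermiteH (n + 2) x = 2 * x * hermiteH (n + 1) x - 2 * (n + 1) * hermiteH n x := by
  rw [hermiteH_eq_sum, hermiteH_eq_sum, hermiteH_eq_sum]
  have key1 : (2 * x) * ∑ m ∈ Finset.range (n + 2), hc (n+1) m * (2 * x) ^ (n + 1 - 2 * m)
      = ∑ m ∈ Finset.range (n + 2), hc (n+1) m * (2 * x) ^ (n + 2 - 2 * m) := by
    rw [Finset.mul_sum]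
    apply Finset.sum_congr rfl
    intro m _
    rcases le_or_gt (2 * m) (n + 1) with h | h
    · have : n + 2 - 2 * m = (n + 1 - 2 * m) + 1 := by omega
      rw [this, pow_succ]
      ring
    · rw [hc_big h]; ring
  rw [key1]
  rw [Finset.sum_range_succ' (fun m => hc (n+2) m * (2 * x) ^ (n + 2 - 2 * m)) (n+2)]
  rw [Finset.sum_range_succ' (fun m => hc (n+1) m * (2 * x) ^ (n + 2 - 2 * m)) (n+1)]
  simp only [Nat.mul_zero, Nat.sub_zero, hc_zero, one_mul]
  have e0 : ∀ m : ℕ, n + 2 - 2 * (m + 1) = n - 2 * m := by omega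
  have key2 : ∑ m ∈ Finset.range (n + 2), hc n m * (2 * x) ^ (n - 2 * m)
      = ∑ m ∈ Finset.range (n + 1), hc n m * (2 * x) ^ (n - 2 * m) := by
    rw [Finset.sum_range_succ, hc_big (show n < 2 * (n+1) by omega), zero_mul, add_zero]
  rw [← key2]
  have key3 : ∀ mm : ℕ, ∑ m ∈ Finset.range mm, hc (n+2) (m+1) * (2 * x) ^ (n + 2 - 2 * (m+1))
      = ∑ m ∈ Finset.range mm, (hc (n+1) (m+1) * (2 * x) ^ (n + 2 - 2*(m+1))
          - 2 * (n+1) * (hc n m * (2 * x) ^ (n - 2 * m))) := by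
    intro mm
    apply Finset.sum_congr rfl
    intro m _
    rw [hc_rec, e0 m]
    ring
  rw [show (n + 2 : ℕ) = (n + 1) + 1 from rfl] at *
  rw [key3 (n+1+1)]
  rw [Finset.sum_range_succ (fun m => hc (n+1) (m+1) * (2 * x) ^ (n + 1 + 1 - 2*(m+1))
          - 2 * (n+1) * (hc n m * (2 * x) ^ (n - 2 * m)))]
  rw [Finset.sum_range_succ (fun m => hc n m * (2 * x) ^ (n - 2 * m))]
  rw [hc_big (show n + 1 < 2 * (n + 1 + 1) by omega), hc_big (show n < 2 * (n+1) by omega)]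
  rw [Finset.sum_sub_distrib, ← Finset.mul_sum]
  ring

lemma hermiteH_rec' (n : ℕ) (x : ℝ) :
    hermiteH (n + 1) x = 2 * x * hermiteH n x - 2 * n * hermiteH (n - 1) x := by
  cases n with
  | zero => simp [hermiteH_zero, hermiteH_one]
  | succ n => rw [hermiteH_rec]; push_cast; ring_nf

lemma hermiteH_hasDerivAt (n : ℕ) (x : ℝ) :
    HasDerivAt (hermiteH n) (2 * n * hermiteH (n - 1) x) x := by
  cases n with
  | zero =>
    have : hermiteH 0 = fun _ : ℝ => (1 : ℝ) := funext hermiteH_zero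
    rw [this]
    simpa using hasDerivAt_const x (1 : ℝ)
  | succ n =>
    have hfun : hermiteH (n + 1)
        = fun y => ∑ m ∈ Finset.range (n + 2), hc (n+1) m * (2*y)^(n+1-2*m) :=
      funext (hermiteH_eq_sum (n+1))
    rw [hfun]
    have hterm : ∀ m ∈ Finset.range (n + 2),
        HasDerivAt (fun y : ℝ => hc (n+1) m * (2*y)^(n+1-2*m))
          (hc (n+1) m * (((n+1-2*m : ℕ) : ℝ) * (2*x)^(n-2*m) * 2)) x := by
      intro m _
      have h1 : HasDerivAt (fun y : ℝ => 2*y) 2 x := by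
        simpa using (hasDerivAt_id x).const_mul (2:ℝ)
      have h2 := (hasDerivAt_pow (n+1-2*m) (2*x)).comp x h1
      have e : n + 1 - 2*m - 1 = n - 2*m := by omega
      rw [e] at h2
      exact h2.const_mul _
    have hsum := HasDerivAt.fun_sum hterm
    have heq : ∑ m ∈ Finset.range (n + 2), hc (n+1) m * (((n+1-2*m : ℕ) : ℝ) * (2*x)^(n-2*m) * 2)
        = 2 * (n+1) * hermiteH n x := by
      rw [hermiteH_eq_sum, Finset.mul_sum]
      have ext : ∑ m ∈ Finset.range (n+2), 2 * ((n:ℝ)+1) * (hc n m * (2*x)^(n-2*m))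
          = ∑ m ∈ Finset.range (n+1), 2 * ((n:ℝ)+1) * (hc n m * (2*x)^(n-2*m)) := by
        rw [Finset.sum_range_succ, hc_big (show n < 2*(n+1) by omega)]
        simp
      rw [← ext]
      apply Finset.sum_congr rfl
      intro m _
      have := hc_deriv n m
      calc hc (n+1) m * (((n+1-2*m : ℕ) : ℝ) * (2*x)^(n-2*m) * 2)
          = (hc (n+1) m * ((n + 1 - 2 * m : ℕ) : ℝ) * 2) * (2*x)^(n-2*m) := by ring
        _ = (2 * ((n:ℝ)+1) * hc n m) * (2*x)^(n-2*m) := by rw [this]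
        _ = 2 * ((n:ℝ)+1) * (hc n m * (2*x)^(n-2*m)) := by ring
    rw [heq] at hsum
    exact hsum.congr_deriv (by simp)

lemma iteratedDeriv_comp_add (f : ℝ → ℝ) (n m : ℕ) :
    iteratedDeriv n (iteratedDeriv m f) = iteratedDeriv (n + m) f := by
  induction n with
  | zero => simp
  | succ n ih =>
    rw [iteratedDeriv_succ, ih]
    have : n + 1 + m = (n + m) + 1 := by omega
    rw [this, iteratedDeriv_succ]

lemma iteratedDeriv_differentiable {f : ℝ → ℝ} (hf : ContDiff ℝ ∞ f) (k : ℕ) :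
    Differentiable ℝ (iteratedDeriv k f) := by
  rw [iteratedDeriv_eq_iterate]
  exact (hf.iterate_deriv k).differentiable (by norm_num)

lemma iteratedDeriv_cmul (c : ℝ) (f : ℝ → ℝ) (hf : ContDiff ℝ ∞ f) (n : ℕ) :
    iteratedDeriv n (fun y => c * f y) = fun x => c * iteratedDeriv n f x := by
  induction n with
  | zero => simp
  | succ n ih =>
    rw [iteratedDeriv_succ, ih, iteratedDeriv_succ]
    funext x
    rw [deriv_const_mul _ ((iteratedDeriv_differentiable hf n) x)]

lemma iteratedDeriv_mul_eq (f g : ℝ → ℝ) (hf : ContDiff ℝ ∞ f) (hg : ContDiff ℝ ∞ g) (n : ℕ) :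
    iteratedDeriv n (fun y => f y * g y) = fun x =>
      ∑ r ∈ Finset.range (n + 1),
        (n.choose r : ℝ) * iteratedDeriv r f x * iteratedDeriv (n - r) g x := by
  induction n with
  | zero => funext x; simp
  | succ n ih =>
    rw [iteratedDeriv_succ, ih]
    funext x
    have hterm : ∀ r ∈ Finset.range (n + 1),
        HasDerivAt (fun y => (n.choose r : ℝ) * iteratedDeriv r f y * iteratedDeriv (n - r) g y)
          ((n.choose r : ℝ) * (iteratedDeriv (r+1) f x * iteratedDeriv (n-r) g x
            + iteratedDeriv r f x * iteratedDeriv (n-r+1) g x)) x := by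
      intro r _
      have Hf : HasDerivAt (iteratedDeriv r f) (iteratedDeriv (r+1) f x) x := by
        rw [iteratedDeriv_succ]
        exact ((iteratedDeriv_differentiable hf r) x).hasDerivAt
      have Hg : HasDerivAt (iteratedDeriv (n-r) g) (iteratedDeriv (n-r+1) g x) x := by
        rw [iteratedDeriv_succ]
        exact ((iteratedDeriv_differentiable hg (n-r)) x).hasDerivAt
      have := (Hf.mul Hg).const_mul ((n.choose r : ℝ))
      simpa [mul_assoc, mul_add] using this
    have hder := (HasDerivAt.fun_sum hterm).deriv
    rw [hder]
    rw [Finset.sum_range_succ' (fun r => ((n+1).choose r : ℝ) * iteratedDeriv r f x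
        * iteratedDeriv (n + 1 - r) g x) (n+1)]
    have e1 : ∀ r : ℕ, n + 1 - (r + 1) = n - r := fun r => by omega
    simp only [e1, Nat.choose_succ_succ, Nat.choose_zero_right, Nat.cast_one, Nat.cast_add]
    rw [show (∑ r ∈ Finset.range (n+1),
        (((n.choose r : ℝ) + (n.choose (r+1) : ℝ)) * iteratedDeriv (r+1) f x
          * iteratedDeriv (n-r) g x))
      = (∑ r ∈ Finset.range (n+1), (n.choose r : ℝ) * iteratedDeriv (r+1) f x
          * iteratedDeriv (n-r) g x)
        + ∑ r ∈ Finset.range (n+1), (n.choose (r+1) : ℝ) * iteratedDeriv (r+1) f x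
          * iteratedDeriv (n-r) g x from by
        rw [← Finset.sum_add_distrib]; apply Finset.sum_congr rfl; intros; ring]
    have key : ∑ r ∈ Finset.range (n+1), (n.choose r : ℝ) * iteratedDeriv r f x
          * iteratedDeriv (n-r+1) g x
        = (∑ r ∈ Finset.range (n+1), (n.choose (r+1) : ℝ) * iteratedDeriv (r+1) f x
          * iteratedDeriv (n-r) g x) + (1 : ℝ) * iteratedDeriv 0 f x * iteratedDeriv (n+1) g x := by
      rw [Finset.sum_range_succ' (fun r => (n.choose r : ℝ) * iteratedDeriv r f x
          * iteratedDeriv (n-r+1) g x) n]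
      rw [Finset.sum_range_succ (fun r => (n.choose (r+1) : ℝ) * iteratedDeriv (r+1) f x
          * iteratedDeriv (n-r) g x)]
      simp only [Nat.choose_zero_right, Nat.cast_one, Nat.sub_zero,
        Nat.choose_succ_self, Nat.cast_zero, zero_mul, add_zero]
      congr 1
      apply Finset.sum_congr rfl
      intro r hr
      simp only [Finset.mem_range] at hr
      have : n - (r+1) + 1 = n - r := by omega
      rw [this]
    have split : ∑ i ∈ Finset.range (n+1), ((n.choose i : ℝ) *
        (iteratedDeriv (i+1) f x * iteratedDeriv (n-i) g x
          + iteratedDeriv i f x * iteratedDeriv (n-i+1) g x))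
      = (∑ i ∈ Finset.range (n+1), (n.choose i : ℝ) * iteratedDeriv (i+1) f x
          * iteratedDeriv (n-i) g x)
        + ∑ i ∈ Finset.range (n+1), (n.choose i : ℝ) * iteratedDeriv i f x
          * iteratedDeriv (n-i+1) g x := by
      rw [← Finset.sum_add_distrib]
      apply Finset.sum_congr rfl
      intros; ring
    rw [split, key]
    simp only [Nat.sub_zero]
    ring

lemma hermiteH_contDiff (n : ℕ) : ContDiff ℝ ∞ (hermiteH n) := by
  have : hermiteH n = fun y => ∑ m ∈ Finset.range (n + 1), hc n m * (2*y)^(n-2*m) :=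
    funext (hermiteH_eq_sum n)
  rw [this]
  apply ContDiff.sum
  intro m _
  exact contDiff_const.mul ((contDiff_const.mul contDiff_id).pow _)

lemma gauss_contDiff : ContDiff ℝ ∞ (fun y : ℝ => Real.exp (-(y^2))) :=
  ((contDiff_id.pow 2).neg).exp

lemma gauss_hasDerivAt (x : ℝ) :
    HasDerivAt (fun y : ℝ => Real.exp (-(y^2))) (Real.exp (-(x^2)) * (-(2*x))) x := by
  have h1 : HasDerivAt (fun y : ℝ => -(y^2)) (-(2*x)) x := by
    have := (hasDerivAt_pow 2 x).neg
    simp at this; exact this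
  simpa using h1.exp

lemma gauss_iteratedDeriv (n : ℕ) :
    iteratedDeriv n (fun y : ℝ => Real.exp (-(y^2)))
      = fun x => (-1 : ℝ)^n * hermiteH n x * Real.exp (-(x^2)) := by
  induction n with
  | zero => funext x; simp [hermiteH_zero]
  | succ n ih =>
    rw [iteratedDeriv_succ, ih]
    funext x
    have Hh := hermiteH_hasDerivAt n x
    have He := gauss_hasDerivAt x
    have hprod := ((Hh.mul He).const_mul ((-1 : ℝ)^n))
    have hfun : (fun y => (-1:ℝ)^n * hermiteH n y * Real.exp (-(y^2)))
        = fun y => (-1:ℝ)^n * (hermiteH n y * Real.exp (-(y^2))) := by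
      funext y; ring
    rw [hfun]
    rw [HasDerivAt.deriv (f := fun y => (-1:ℝ)^n * (hermiteH n y * Real.exp (-(y^2)))) hprod]
    rw [hermiteH_rec' n x]
    ring

lemma hermiteH_iteratedDeriv (m r : ℕ) :
    iteratedDeriv r (hermiteH m)
      = fun x => 2^r * (r.factorial : ℝ) * (m.choose r : ℝ) * hermiteH (m - r) x := by
  induction r with
  | zero => funext x; simp
  | succ r ih =>
    rw [iteratedDeriv_succ, ih]
    funext x
    have Hd := hermiteH_hasDerivAt (m - r) x
    have := (Hd.const_mul (2^r * (r.factorial : ℝ) * (m.choose r : ℝ)))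
    rw [this.deriv]
    have e : m - r - 1 = m - (r + 1) := by omega
    rw [e]
    have hcast : ((m.choose (r+1) : ℝ)) * ((r:ℝ)+1) = (m.choose r : ℝ) * ((m - r : ℕ) : ℝ) := by
      exact_mod_cast congrArg (Nat.cast : ℕ → ℝ) (Nat.choose_succ_right_eq m r)
    have hfac : ((r+1).factorial : ℝ) = ((r:ℝ)+1) * (r.factorial : ℝ) := by
      push_cast [Nat.factorial_succ]; ring
    rw [hfac]
    have h2 : (2:ℝ)^(r+1) = 2 * 2^r := by rw [pow_succ]; ring
    rw [h2]
    linear_combination (-(2 * 2^r * (r.factorial : ℝ) * hermiteH (m - (r+1)) x)) * hcast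

theorem burchnall_hermite_expansion (m n : ℕ) (x : ℝ) :
    hermiteH (n + m) x =
      ∑ r ∈ Finset.range (min n m + 1),
        (n.choose r : ℝ) * (m.choose r : ℝ) * (-2 : ℝ) ^ r * (r.factorial : ℝ) *
          hermiteH (n - r) x * hermiteH (m - r) x := by
  set f : ℝ → ℝ := fun y => Real.exp (-(y^2)) with hfdef
  have hE : f x ≠ 0 := Real.exp_ne_zero _
  have hA : iteratedDeriv (n+m) f x = (-1:ℝ)^(n+m) * hermiteH (n+m) x * f x :=
    congrFun (gauss_iteratedDeriv (n+m)) x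
  have hsmooth : ContDiff ℝ ∞ (fun y => hermiteH m y * f y) :=
    (hermiteH_contDiff m).mul gauss_contDiff
  have hB : iteratedDeriv (n+m) f x
      = (-1:ℝ)^m * ∑ r ∈ Finset.range (n+1),
          (n.choose r : ℝ) * (2^r * (r.factorial : ℝ) * (m.choose r : ℝ) * hermiteH (m-r) x)
            * ((-1:ℝ)^(n-r) * hermiteH (n-r) x * f x) := by
    rw [← iteratedDeriv_comp_add f n m]
    rw [gauss_iteratedDeriv m]
    have hfun : (fun y => (-1:ℝ)^m * hermiteH m y * Real.exp (-(y^2)))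
        = fun y => (-1:ℝ)^m * (hermiteH m y * f y) := by
      funext y; rw [hfdef]; ring
    rw [hfun]
    rw [congrFun (iteratedDeriv_cmul ((-1:ℝ)^m) _ hsmooth n) x]
    congr 1
    rw [congrFun (iteratedDeriv_mul_eq (hermiteH m) f (hermiteH_contDiff m) gauss_contDiff n) x]
    apply Finset.sum_congr rfl
    intro r _
    rw [congrFun (hermiteH_iteratedDeriv m r) x, congrFun (gauss_iteratedDeriv (n-r)) x]
  have hmain : hermiteH (n+m) x * f x
      = (∑ r ∈ Finset.range (n+1),
          (n.choose r : ℝ) * (m.choose r : ℝ) * (-2 : ℝ) ^ r * (r.factorial : ℝ) *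
            hermiteH (n - r) x * hermiteH (m - r) x) * f x := by
    have hsq : ((-1:ℝ))^(n+m) * ((-1:ℝ))^(n+m) = 1 := by
      rw [← pow_add, show (n+m)+(n+m) = 2*(n+m) by ring, pow_mul]
      norm_num
    calc hermiteH (n+m) x * f x
        = (-1:ℝ)^(n+m) * iteratedDeriv (n+m) f x := by
          rw [hA, ← mul_assoc, ← mul_assoc, hsq, one_mul]
      _ = (∑ r ∈ Finset.range (n+1),
          (n.choose r : ℝ) * (m.choose r : ℝ) * (-2 : ℝ) ^ r * (r.factorial : ℝ) *
            hermiteH (n - r) x * hermiteH (m - r) x) * f x := by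
          rw [hB, ← mul_assoc, Finset.mul_sum, Finset.sum_mul]
          apply Finset.sum_congr rfl
          intro r hr
          simp only [Finset.mem_range] at hr
          have hsign : (-1:ℝ)^(n+m) * (-1:ℝ)^m * (-1:ℝ)^(n-r) = (-1:ℝ)^r := by
            rw [← pow_add, ← pow_add,
              show (n+m)+m+(n-r) = r + 2*((n-r)+m) by omega, pow_add, pow_mul]
            norm_num
          have hneg2 : (-2:ℝ)^r = (-1:ℝ)^r * 2^r := by
            rw [show (-2:ℝ) = -1 * 2 by norm_num, mul_pow]
          rw [hneg2]
          linear_combination ((n.choose r : ℝ) * 2^r * (r.factorial : ℝ) * (m.choose r : ℝ)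
            * hermiteH (m-r) x * hermiteH (n-r) x * f x) * hsign
  have hcancel := mul_right_cancel₀ hE hmain
  rw [hcancel]
  symm
  apply Finset.sum_subset
  · apply Finset.range_subset_range.mpr
    omega
  · intro r hr hr'
    simp only [Finset.mem_range] at hr hr'
    have : m < r := by omega
    rw [Nat.choose_eq_zero_of_lt this]
    norm_num
end

section
/- Let β > 0, 0 < c < 1, n ∈ ℕ, and t ∈ ℝ. Then for all x ∈ ℝ, M_n(x; β, c·e^{−t}) = Σ_{k=0}^{n} ((−n)_k (−x)_k / (k! (β)_k c^k)) · M_{n−k}(x−k; β+k, c) · (1−e^{t})^k. -/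
open Finset

/-- Pochhammer symbol `(a)_j = a(a+1)⋯(a+j-1)`. -/
noncomputable def poch (a : ℝ) (j : ℕ) : ℝ := ∏ i ∈ Finset.range j, (a + i)

/-- Meixner polynomial `M_n(x; β, c)`. -/
noncomputable def meixnerM (n : ℕ) (x β c : ℝ) : ℝ :=
  ∑ k ∈ Finset.range (n + 1),
    poch (-(n : ℝ)) k * poch (-x) k / (poch β k * (k.factorial : ℝ)) * ((c - 1) / c) ^ k

lemma poch_add (a : ℝ) (k m : ℕ) : poch a (k + m) = poch a k * poch (a + k) m := by
  unfold poch
  rw [Finset.prod_range_add]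
  congr 1
  refine Finset.prod_congr rfl fun i _ => ?_
  push_cast
  ring

lemma poch_pos (a : ℝ) (ha : 0 < a) (k : ℕ) : 0 < poch a k := by
  unfold poch
  exact Finset.prod_pos fun i _ => by positivity

lemma tri (f : ℕ → ℕ → ℝ) (n : ℕ) :
    ∑ j ∈ range (n + 1), ∑ k ∈ range (j + 1), f k (j - k)
      = ∑ k ∈ range (n + 1), ∑ m ∈ range (n - k + 1), f k m := by
  induction n with
  | zero => simp
  | succ n ih =>
    rw [Finset.sum_range_succ, ih,
      Finset.sum_range_succ (fun k => ∑ m ∈ range (n + 1 - k + 1), f k m)]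
    have h : ∀ k ∈ range (n + 1),
        ∑ m ∈ range (n + 1 - k + 1), f k m
          = ∑ m ∈ range (n - k + 1), f k m + f k (n + 1 - k) := by
      intro k hk
      have hk' : k ≤ n := Nat.lt_succ_iff.mp (mem_range.mp hk)
      have h1 : n + 1 - k + 1 = (n - k + 1) + 1 := by omega
      have h2 : n - k + 1 = n + 1 - k := by omega
      rw [h1, Finset.sum_range_succ, h2]
    rw [Finset.sum_congr rfl h, Finset.sum_add_distrib,
      Finset.sum_range_succ (fun k => f k (n + 1 - k))]
    simp only [Nat.sub_self, Nat.zero_add, Finset.sum_range_one]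
    ring

theorem meixner_toda_expansion_second (β c : ℝ) (hβ : 0 < β) (hc0 : 0 < c) (hc1 : c < 1)
    (n : ℕ) (t : ℝ) (x : ℝ) :
    meixnerM n x β (c * Real.exp (-t)) =
      ∑ k ∈ Finset.range (n + 1),
        poch (-(n : ℝ)) k * poch (-x) k / ((k.factorial : ℝ) * poch β k * c ^ k) *
          meixnerM (n - k) (x - k) (β + k) c * (1 - Real.exp t) ^ k := by
  have hc : c ≠ 0 := ne_of_gt hc0
  have hexp : Real.exp t ≠ 0 := Real.exp_ne_zero t
  set u : ℝ := (1 - Real.exp t) / c with hu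
  set v : ℝ := (c - 1) / c with hv
  have harg : (c * Real.exp (-t) - 1) / (c * Real.exp (-t)) = u + v := by
    rw [hu, hv, Real.exp_neg]
    field_simp
    ring
  -- the summand as a function of (k, m)
  set f : ℕ → ℕ → ℝ := fun k m =>
    poch (-(n : ℝ)) (k + m) * poch (-x) (k + m) /
      (poch β (k + m) * ((k + m).factorial : ℝ)) *
      (u ^ k * v ^ m * ((k + m).choose k : ℝ)) with hf
  have lhs_eq : meixnerM n x β (c * Real.exp (-t))
      = ∑ j ∈ range (n + 1), ∑ k ∈ range (j + 1), f k (j - k) := by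
    unfold meixnerM
    refine Finset.sum_congr rfl fun j _ => ?_
    rw [harg, add_pow, Finset.mul_sum]
    refine Finset.sum_congr rfl fun k hk => ?_
    have hkj : k ≤ j := Nat.lt_succ_iff.mp (mem_range.mp hk)
    have hkm : k + (j - k) = j := by omega
    simp only [hf, hkm]
  rw [lhs_eq, tri]
  refine Finset.sum_congr rfl fun k hk => ?_
  have hkn : k ≤ n := Nat.lt_succ_iff.mp (mem_range.mp hk)
  unfold meixnerM
  rw [Finset.mul_sum, Finset.sum_mul]
  have hrange : n - k + 1 = (n - k) + 1 := rfl
  refine Finset.sum_congr rfl fun m hm => ?_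
  have hmn : m ≤ n - k := Nat.lt_succ_iff.mp (mem_range.mp hm)
  have hnk : ((n - k : ℕ) : ℝ) = (n : ℝ) - k := Nat.cast_sub hkn
  have h1 : poch (-(n : ℝ)) (k + m) = poch (-(n : ℝ)) k * poch (-((n - k : ℕ) : ℝ)) m := by
    rw [poch_add]; congr 2; rw [hnk]; ring
  have h2 : poch (-x) (k + m) = poch (-x) k * poch (-(x - k)) m := by
    rw [poch_add]; congr 2; ring
  have h3 : poch β (k + m) = poch β k * poch (β + k) m := poch_add β k m
  have h4 : ((k + m).factorial : ℝ) = ((k + m).choose k : ℝ) * k.factorial * m.factorial := by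
    have h := Nat.choose_mul_factorial_mul_factorial (Nat.le_add_right k m)
    rw [Nat.add_sub_cancel_left] at h
    exact_mod_cast h.symm
  have hch : ((k + m).choose k : ℝ) ≠ 0 :=
    Nat.cast_ne_zero.mpr (Nat.choose_pos (Nat.le_add_right k m)).ne'
  have hpβk : poch β k ≠ 0 := ne_of_gt (poch_pos β hβ k)
  have hpβkm : poch (β + k) m ≠ 0 := ne_of_gt (poch_pos _ (by positivity) m)
  have hkf : (k.factorial : ℝ) ≠ 0 := Nat.cast_ne_zero.mpr (Nat.factorial_ne_zero k)
  have hmf : (m.factorial : ℝ) ≠ 0 := Nat.cast_ne_zero.mpr (Nat.factorial_ne_zero m)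
  simp only [hf, h1, h2, h3, h4, hu, hv]
  field_simp
  have hck : ((1 - Real.exp t) / c) ^ k * c ^ k = (1 - Real.exp t) ^ k := by
    rw [div_pow, div_mul_cancel₀ _ (pow_ne_zero k hc)]
  rw [mul_right_comm _ (((c - 1) / c) ^ m), mul_assoc _ (((1 - Real.exp t) / c) ^ k), hck]
  ring
end
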